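/- The coefficient of w¹ in S(0) = (1 - wx - √(1-(4+2w)x+(4w+w²)x²))/(2x) equals (1-2x-√(1-4x))/(2√(1-4x)), i.e., the generating function for skew Dyck paths with exactly one south-west step. -/

import Mathlib

inductive SkewStep : Type
  | up : SkewStep
  | down : SkewStep
  | red : SkewStep
deriving DecidableEq

def SkewStep.val : SkewStep → ℤ
  | SkewStep.up => 1
  | SkewStep.down => -1
  | SkewStep.red => -1

def SkewStep.ok (a b : SkewStep) : Prop :=
  ¬ (a = SkewStep.up ∧ b = SkewStep.red) ∧ ¬ (a = SkewStep.red ∧ b = SkewStep.up)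

def IsSkewPrefix (l : List SkewStep) : Prop :=
  l.Chain' SkewStep.ok ∧ ∀ k, 0 ≤ ((l.take k).map SkewStep.val).sum

def IsSkewPath (l : List SkewStep) (j : ℤ) : Prop :=
  IsSkewPrefix l ∧ (l.map SkewStep.val).sum = j

open PowerSeries

namespace SkewAux

open SkewStep

instance : Fintype SkewStep :=
  ⟨{SkewStep.up, SkewStep.down, SkewStep.red}, fun x => by cases x <;> simp⟩

instance : DecidableRel SkewStep.ok := fun a b => by
  unfold SkewStep.ok; infer_instance

/-- sum of values -/
def sv (l : List SkewStep) : ℤ := (l.map SkewStep.val).sum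

@[simp] lemma sv_nil : sv [] = 0 := rfl

@[simp] lemma sv_cons (a : SkewStep) (l : List SkewStep) :
    sv (a :: l) = a.val + sv l := by simp [sv]

@[simp] lemma sv_append (l₁ l₂ : List SkewStep) :
    sv (l₁ ++ l₂) = sv l₁ + sv l₂ := by simp [sv]

lemma isSkewPrefix_iff (l : List SkewStep) :
    IsSkewPrefix l ↔ l.Chain' SkewStep.ok ∧
      ∀ k ∈ Finset.range (l.length + 1), 0 ≤ sv (l.take k) := by
  constructor
  · rintro ⟨h1, h2⟩; exact ⟨h1, fun k _ => h2 k⟩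
  · rintro ⟨h1, h2⟩
    refine ⟨h1, fun k => ?_⟩
    rcases le_or_gt k l.length with h | h
    · exact h2 k (Finset.mem_range.mpr (by omega))
    · have : l.take k = l := List.take_of_length_le (by omega)
      rw [this]
      have := h2 l.length (Finset.mem_range.mpr (by omega))
      rwa [List.take_length] at this

instance : DecidablePred IsSkewPrefix := fun l => by
  exact @decidable_of_iff _ _ (isSkewPrefix_iff l).symm
    (inferInstanceAs (Decidable (List.IsChain SkewStep.ok l ∧ _)))

instance (l : List SkewStep) (j : ℤ) : Decidable (IsSkewPath l j) :=
  instDecidableAnd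

lemma sv_take_succ (l : List SkewStep) (k : ℕ) (h : k < l.length) :
    sv (l.take (k + 1)) = sv (l.take k) + (l.get ⟨k, h⟩).val := by
  have : sv (l.take (k+1)) = ((l.map SkewStep.val).take (k+1)).sum := by
    simp [sv, List.map_take]
  rw [this, List.sum_take_succ _ k (by simpa using h)]
  simp [sv, List.map_take]

lemma val_cases (a : SkewStep) : a.val = 1 ∨ a.val = -1 := by
  cases a <;> simp [SkewStep.val]

lemma val_eq_one_iff (a : SkewStep) : a.val = 1 ↔ a = up := by
  cases a <;> simp [SkewStep.val]

lemma val_eq_neg_one_iff (a : SkewStep) : a.val = -1 ↔ a ≠ up := by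
  cases a <;> simp [SkewStep.val]

@[simp] lemma ok_down (a : SkewStep) : SkewStep.ok a down := by
  cases a <;> simp [SkewStep.ok]

@[simp] lemma down_ok (b : SkewStep) : SkewStep.ok down b := by
  cases b <;> simp [SkewStep.ok]

lemma ok_up {a : SkewStep} (h : a ≠ red) : SkewStep.ok a up := by
  cases a <;> simp_all [SkewStep.ok]

lemma ok_red {a : SkewStep} (h : a ≠ up) : SkewStep.ok a red := by
  cases a <;> simp_all [SkewStep.ok]

lemma not_ok_up_red : ¬ SkewStep.ok up red := by simp [SkewStep.ok]

lemma not_ok_red_up : ¬ SkewStep.ok red up := by simp [SkewStep.ok]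

/-- the head of a nonempty skew prefix is `up` -/
lemma head_up {x : SkewStep} {m : List SkewStep} (h : IsSkewPrefix (x :: m)) :
    x = up := by
  have h1 := h.2 1
  simp [sv] at h1
  rcases val_eq_one_iff x with ⟨_, _⟩
  cases x
  · rfl
  · simp [SkewStep.val] at h1
  · simp [SkewStep.val] at h1

/-- the last entry of a nonempty skew path to 0 is not `up` -/
lemma getLast_ne_up {l : List SkewStep} (h : IsSkewPath l 0) (hne : l ≠ []) :
    l.getLast hne ≠ up := by
  have hd : l.dropLast ++ [l.getLast hne] = l := List.dropLast_append_getLast hne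
  have hsum : sv l.dropLast + (l.getLast hne).val = 0 := by
    have := congrArg sv hd
    simp at this
    have h2 : sv l = 0 := h.2
    omega
  have hpre : 0 ≤ sv l.dropLast := by
    have := h.1.2 (l.length - 1)
    rwa [← List.dropLast_eq_take] at this
  intro hup
  rw [hup] at hsum
  simp [SkewStep.val] at hsum
  omega

lemma even_length {l : List SkewStep} (h : IsSkewPath l 0) : Even l.length := by
  have key : ∀ l : List SkewStep, (2 : ℤ) ∣ (sv l + l.length) := by
    intro l
    induction l with
    | nil => simp
    | cons a t ih =>
      have : sv (a :: t) + (a :: t).length = (a.val + 1) + (sv t + t.length) := by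
        simp; ring
      rw [this]
      rcases val_cases a with h | h <;> rw [h] <;> omega
  have := key l
  rw [show sv l = 0 from h.2] at this
  simp at this
  rcases this with ⟨c, hc⟩
  exact ⟨c.toNat, by omega⟩

/-- closure under the U-Q-D-R construction -/
lemma skew_gg {Q R : List SkewStep} (hQ : IsSkewPath Q 0) (hR : IsSkewPath R 0) :
    IsSkewPath (up :: Q ++ down :: R) 0 := by
  constructor
  · constructor
    · -- Chain'
      rw [show (up :: Q ++ down :: R) = (up :: Q) ++ (down :: R) by simp]
      simp only [List.Chain']
      rw [List.isChain_append]
      refine ⟨?_, ?_, ?_⟩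
      · rw [List.isChain_cons]
        refine ⟨?_, hQ.1.1⟩
        intro y hy
        rcases Q with _ | ⟨q, Q'⟩
        · simp at hy
        · simp at hy
          subst hy
          have : q = up := head_up hQ.1
          rw [this]; exact ok_up (by simp)
      · rw [List.isChain_cons]
        exact ⟨fun y _ => down_ok y, hR.1.1⟩
      · intro x _ y hy
        simp at hy; subst hy; exact ok_down x
    · -- prefix sums
      intro k
      rcases k with _ | j
      · simp
      · show 0 ≤ sv ((up :: (Q ++ down :: R)).take (j+1))
        rw [List.take_cons (Nat.succ_pos j), Nat.succ_sub_one, sv_cons]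
        have hsp : sv ((Q ++ down :: R).take j) = sv (Q.take j) + sv ((down :: R).take (j - Q.length)) := by
          rw [List.take_append, sv_append]
        rw [hsp]
        have hQj : 0 ≤ sv (Q.take j) := hQ.1.2 j
        rcases le_or_gt j Q.length with hj | hj
        · have h0 : j - Q.length = 0 := by omega
          rw [h0]
          simp [SkewStep.val]
          omega
        · have h1 : Q.take j = Q := List.take_of_length_le (by omega)
          have h2 : j - Q.length = (j - Q.length - 1) + 1 := by omega
          have hQ0 : sv Q = 0 := hQ.2
          rw [h1, h2, List.take_cons (Nat.succ_pos _), Nat.succ_sub_one, sv_cons, hQ0]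
          have hRj : 0 ≤ sv (R.take (j - Q.length - 1)) := hR.1.2 _
          simp only [SkewStep.val]
          omega
  · show sv (up :: Q ++ down :: R) = 0
    have hQ0 : sv Q = 0 := hQ.2
    have hR0 : sv R = 0 := hR.2
    rw [show (up :: Q ++ down :: R) = up :: (Q ++ down :: R) by simp]
    rw [sv_cons, sv_append, sv_cons, hQ0, hR0]
    simp [SkewStep.val]

/-- closure under the U-Q-L construction -/
lemma skew_hh {Q : List SkewStep} (hQ : IsSkewPath Q 0) (hne : Q ≠ []) :
    IsSkewPath (up :: Q ++ [red]) 0 := by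
  constructor
  · constructor
    · rw [show (up :: Q ++ [red]) = (up :: Q) ++ [red] by simp]
      simp only [List.Chain']
      rw [List.isChain_append]
      refine ⟨?_, List.isChain_singleton _, ?_⟩
      · rw [List.isChain_cons]
        refine ⟨?_, hQ.1.1⟩
        intro y hy
        rcases Q with _ | ⟨q, Q'⟩
        · simp at hy
        · simp at hy; subst hy
          have : q = up := head_up hQ.1
          rw [this]; exact ok_up (by simp)
      · intro x hx y hy
        simp at hy; subst hy
        have hgl : (up :: Q).getLast (by simp) = Q.getLast hne := by
          rw [List.getLast_cons hne]
        rw [List.getLast?_eq_getLast (l := up :: Q) (by simp)] at hx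
        simp at hx
        rw [hgl] at hx
        subst hx
        exact ok_red (getLast_ne_up hQ hne)
    · intro k
      rcases k with _ | j
      · simp
      · show 0 ≤ sv ((up :: (Q ++ [red])).take (j+1))
        rw [List.take_cons (Nat.succ_pos j), Nat.succ_sub_one, sv_cons]
        have hsp : sv ((Q ++ [red]).take j) = sv (Q.take j) + sv ([red].take (j - Q.length)) := by
          rw [List.take_append, sv_append]
        rw [hsp]
        have hQj : 0 ≤ sv (Q.take j) := hQ.1.2 j
        rcases le_or_gt j Q.length with hj | hj
        · have h0 : j - Q.length = 0 := by omega
          rw [h0]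
          simp [SkewStep.val]
          omega
        · have h1 : Q.take j = Q := List.take_of_length_le (by omega)
          have h2 : [red].take (j - Q.length) = [red] := List.take_of_length_le (by simp; omega)
          have hQ0 : sv Q = 0 := hQ.2
          rw [h1, h2, hQ0]
          simp [sv, SkewStep.val]
  · show sv (up :: Q ++ [red]) = 0
    have hQ0 : sv Q = 0 := hQ.2
    rw [show (up :: Q ++ [red]) = up :: (Q ++ [red]) by simp]
    rw [sv_cons, sv_append, hQ0]
    simp [sv, SkewStep.val]

/-- first-return decomposition -/
lemma decomp {l : List SkewStep} (h : IsSkewPath l 0) (hne : l ≠ []) :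
    (∃ Q R, IsSkewPath Q 0 ∧ IsSkewPath R 0 ∧ l = up :: Q ++ down :: R) ∨
    (∃ Q, IsSkewPath Q 0 ∧ Q ≠ [] ∧ l = up :: Q ++ [red]) := by
  obtain ⟨x, m, rfl⟩ := List.exists_cons_of_ne_nil hne
  have hx : x = up := head_up h.1
  subst hx
  have hchm : m.Chain' SkewStep.ok := (List.isChain_cons.mp h.1.1).2
  have hpre : ∀ j, -1 ≤ sv (m.take j) := by
    intro j
    have h1 : (0:ℤ) ≤ sv ((up :: m).take (j+1)) := h.1.2 (j+1)
    rw [List.take_cons (Nat.succ_pos j), Nat.succ_sub_one, sv_cons] at h1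
    simp only [SkewStep.val] at h1
    omega
  have hm : sv m = -1 := by
    have h1 : sv (up :: m) = 0 := h.2
    rw [sv_cons] at h1
    simp only [SkewStep.val] at h1
    omega
  have hex : ∃ j, sv (m.take j) = -1 := ⟨m.length, by rw [List.take_length]; exact hm⟩
  obtain ⟨k, hk⟩ : ∃ k, Nat.find hex = k + 1 := by
    refine ⟨Nat.find hex - 1, ?_⟩
    have h0 : Nat.find hex ≠ 0 := by
      intro h0
      have := Nat.find_spec hex
      rw [h0] at this
      simp at this
    omega
  have hKspec : sv (m.take (k+1)) = -1 := by rw [← hk]; exact Nat.find_spec hex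
  have hKmin : ∀ j ≤ k, 0 ≤ sv (m.take j) := by
    intro j hj
    have h1 := Nat.find_min hex (m := j) (by omega)
    have h2 := hpre j
    omega
  have hKlen : k + 1 ≤ m.length := by
    rw [← hk]
    exact Nat.find_le (by rw [List.take_length]; exact hm)
  have hkm : k < m.length := by omega
  set d := m.get ⟨k, hkm⟩ with hd
  set Q := m.take k with hQdef
  set R := m.drop (k+1) with hRdef
  have hQlen : Q.length = k := by
    rw [hQdef, List.length_take]
    omega
  have hmdecomp : m = Q ++ d :: R := by
    have h1 : m.drop k = d :: R := by
      rw [hRdef, hd]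
      exact List.drop_eq_getElem_cons hkm
    rw [← h1, hQdef, List.take_append_drop]
  have hstep : sv (m.take (k+1)) = sv Q + d.val := sv_take_succ m k hkm
  have hQsum : sv Q = 0 ∧ d.val = -1 := by
    have h1 : 0 ≤ sv Q := hKmin k le_rfl
    rcases val_cases d with h2 | h2 <;> omega
  have hQ : IsSkewPath Q 0 := by
    refine ⟨⟨hchm.prefix (hQdef ▸ List.take_prefix k m), fun j => ?_⟩, hQsum.1⟩
    have h1 : Q.take j = m.take (min j k) := by rw [hQdef, List.take_take]
    rw [show ((Q.take j).map SkewStep.val).sum = sv (Q.take j) from rfl, h1]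
    exact hKmin _ (by omega)
  have hdval : d.val = -1 := hQsum.2
  have hdcase : d = down ∨ d = red := by
    rcases d with _ | _ | _
    · simp [SkewStep.val] at hdval
    · left; rfl
    · right; rfl
  rcases hdcase with hdd | hdr
  · -- d = down : R is a skew path
    left
    have hRsum : sv R = 0 := by
      have h1 := congrArg sv (List.take_append_drop (k+1) m)
      rw [sv_append] at h1
      rw [← hRdef] at h1
      omega
    have hR : IsSkewPath R 0 := by
      refine ⟨⟨hchm.suffix (hRdef ▸ List.drop_suffix (k+1) m), fun i => ?_⟩, hRsum⟩
      have h1 : m.take (k+1+i) = m.take (k+1) ++ R.take i := by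
        rw [List.take_add, hRdef]
      have h2 := hpre (k+1+i)
      rw [h1, sv_append, hKspec] at h2
      show (0:ℤ) ≤ sv (R.take i)
      omega
    exact ⟨Q, R, hQ, hR, by rw [hmdecomp, hdd]; simp⟩
  · -- d = red : R must be empty, Q nonempty
    right
    have hRnil : R = [] := by
      by_contra hR0
      obtain ⟨y, R', hyR⟩ := List.exists_cons_of_ne_nil hR0
      -- chain gives ok red y, so y ≠ up
      have hchsub : List.Chain' SkewStep.ok (d :: y :: R') := by
        have h0 := hchm
        rw [hmdecomp, hyR] at h0
        exact (List.isChain_append.mp h0).2.1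
      have hok : SkewStep.ok d y := (List.isChain_cons_cons.mp hchsub).1
      have hyval : y.val = -1 := by
        rw [val_eq_neg_one_iff]
        intro hy
        rw [hdr, hy] at hok
        exact not_ok_red_up hok
      have h1 : m.take (k+2) = Q ++ [d, y] := by
        rw [hmdecomp, hyR, List.take_append]
        rw [List.take_of_length_le (by omega), hQlen]
        have h2 : k + 2 - k = 2 := by omega
        rw [h2]
        rfl
      have h2 := hpre (k+2)
      rw [h1, sv_append, hQsum.1] at h2
      simp [sv] at h2
      omega
    have hQne : Q ≠ [] := by
      intro hQ0
      have : up :: m = [up, red] := by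
        rw [hmdecomp, hQ0, hRnil, hdr]
        simp
      have hch := h.1.1
      rw [this] at hch
      exact not_ok_up_red (List.isChain_cons_cons.mp hch).1
    refine ⟨Q, hQ, hQne, ?_⟩
    rw [hmdecomp, hRnil, hdr]
    simp

lemma decomp_unique_aux {Q₁ Q₂ R₁ R₂ : List SkewStep} {d₁ d₂ : SkewStep}
    (hQ₁ : sv Q₁ = 0) (hQ₂ : IsSkewPath Q₂ 0) (hd₁ : d₁.val = -1)
    (he : Q₁ ++ d₁ :: R₁ = Q₂ ++ d₂ :: R₂) (hlt : Q₁.length < Q₂.length) :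
    False := by
  have h1 : (Q₁ ++ d₁ :: R₁).take (Q₁.length + 1) = Q₁ ++ [d₁] := by
    rw [List.take_append, List.take_of_length_le (by omega)]
    simp
  have h2 : (Q₂ ++ d₂ :: R₂).take (Q₁.length + 1) = Q₂.take (Q₁.length + 1) := by
    rw [List.take_append]
    have : Q₁.length + 1 - Q₂.length = 0 := by omega
    rw [this]
    simp
  have h3 : Q₂.take (Q₁.length + 1) = Q₁ ++ [d₁] := by rw [← h2, ← he, h1]
  have h4 : (0:ℤ) ≤ sv (Q₂.take (Q₁.length + 1)) := hQ₂.1.2 _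
  rw [h3, sv_append, hQ₁] at h4
  have h5 : sv [d₁] = d₁.val := by simp [sv]
  rw [h5, hd₁] at h4
  omega

/-- uniqueness of the decomposition -/
lemma decomp_unique {Q₁ Q₂ R₁ R₂ : List SkewStep} {d₁ d₂ : SkewStep}
    (hQ₁ : IsSkewPath Q₁ 0) (hQ₂ : IsSkewPath Q₂ 0)
    (hd₁ : d₁.val = -1) (hd₂ : d₂.val = -1)
    (he : Q₁ ++ d₁ :: R₁ = Q₂ ++ d₂ :: R₂) :
    Q₁ = Q₂ ∧ d₁ = d₂ ∧ R₁ = R₂ := by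
  have hlen : Q₁.length = Q₂.length := by
    rcases lt_trichotomy Q₁.length Q₂.length with h | h | h
    · exact absurd (decomp_unique_aux hQ₁.2 hQ₂ hd₁ he h) id
    · exact h
    · exact absurd (decomp_unique_aux hQ₂.2 hQ₁ hd₂ he.symm h) id
  obtain ⟨hq, ht⟩ := List.append_inj he hlen
  refine ⟨hq, ?_, ?_⟩
  · exact (List.cons.injEq _ _ _ _ ▸ ht).1
  · exact (List.cons.injEq _ _ _ _ ▸ ht).2

/-! ### Finsets of paths -/

/-- all lists of a given length -/
def allF : ℕ → Finset (List SkewStep)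
  | 0 => {[]}
  | (m+1) => (Finset.univ ×ˢ allF m).image (fun p => p.1 :: p.2)

lemma mem_allF (m : ℕ) (l : List SkewStep) : l ∈ allF m ↔ l.length = m := by
  induction m generalizing l with
  | zero => simp [allF, List.length_eq_zero_iff]
  | succ m ih =>
    simp only [allF, Finset.mem_image, Finset.mem_product]
    constructor
    · rintro ⟨⟨a, t⟩, ⟨-, ht⟩, rfl⟩
      simp [(ih t).mp ht]
    · intro hl
      rcases l with _ | ⟨a, t⟩
      · simp at hl
      · exact ⟨(a, t), ⟨Finset.mem_univ a, (ih t).mpr (by simpa using hl)⟩, rfl⟩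

/-- skew paths of semilength `n` with `r` red steps -/
def FS (n r : ℕ) : Finset (List SkewStep) :=
  (allF (2*n)).filter (fun l => IsSkewPath l 0 ∧ l.count SkewStep.red = r)

lemma mem_FS {n r : ℕ} {l : List SkewStep} :
    l ∈ FS n r ↔ l.length = 2*n ∧ IsSkewPath l 0 ∧ l.count SkewStep.red = r := by
  simp [FS, Finset.mem_filter, mem_allF, and_assoc]

lemma count_gg (Q R : List SkewStep) :
    (up :: Q ++ down :: R).count red = Q.count red + R.count red := by
  simp [List.count_append, List.count_cons]

lemma count_hh (Q : List SkewStep) :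
    (up :: Q ++ [red]).count red = Q.count red + 1 := by
  simp [List.count_append, List.count_cons]

lemma len_gg (Q R : List SkewStep) :
    (up :: Q ++ down :: R).length = Q.length + R.length + 2 := by
  simp; omega

lemma len_hh (Q : List SkewStep) :
    (up :: Q ++ [red]).length = Q.length + 2 := by
  simp

lemma nil_skew : IsSkewPath ([] : List SkewStep) 0 :=
  ⟨⟨List.isChain_nil, fun k => by simp⟩, rfl⟩

lemma FS_zero_zero : FS 0 0 = {[]} := by
  ext l
  simp only [mem_FS, Finset.mem_singleton]
  constructor
  · rintro ⟨h1, -, -⟩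
    exact List.length_eq_zero_iff.mp (by simpa using h1)
  · rintro rfl
    exact ⟨by simp, nil_skew, by simp⟩

lemma FS_zero_one : FS 0 1 = ∅ := by
  ext l
  simp only [mem_FS, Finset.notMem_empty, iff_false]
  rintro ⟨h1, -, h3⟩
  have : l = [] := List.length_eq_zero_iff.mp (by simpa using h1)
  subst this
  simp at h3

lemma card_FS_zero_zero : (FS 0 0).card = 1 := by rw [FS_zero_zero]; rfl

lemma card_FS_zero_one : (FS 0 1).card = 0 := by rw [FS_zero_one]; rfl

def gmap (p : List SkewStep × List SkewStep) : List SkewStep := up :: p.1 ++ down :: p.2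

def hmap (Q : List SkewStep) : List SkewStep := up :: Q ++ [red]

@[simp] lemma gmap_eq (Q R : List SkewStep) : gmap (Q, R) = up :: Q ++ down :: R := rfl

@[simp] lemma hmap_eq (Q : List SkewStep) : hmap Q = up :: Q ++ [red] := rfl

lemma gg_inj {Q₁ R₁ Q₂ R₂ : List SkewStep} (hQ₁ : IsSkewPath Q₁ 0) (hQ₂ : IsSkewPath Q₂ 0)
    (he : gmap (Q₁, R₁) = gmap (Q₂, R₂)) : Q₁ = Q₂ ∧ R₁ = R₂ := by
  have ht : Q₁ ++ down :: R₁ = Q₂ ++ down :: R₂ := by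
    have := congrArg List.tail he
    simpa [gmap] using this
  obtain ⟨h1, -, h2⟩ := decomp_unique (d₁ := SkewStep.down) (d₂ := SkewStep.down)
    hQ₁ hQ₂ rfl rfl ht
  exact ⟨h1, h2⟩

lemma hh_inj {Q₁ Q₂ : List SkewStep} (hQ₁ : IsSkewPath Q₁ 0) (hQ₂ : IsSkewPath Q₂ 0)
    (he : hmap Q₁ = hmap Q₂) : Q₁ = Q₂ := by
  have ht : Q₁ ++ red :: ([] : List SkewStep) = Q₂ ++ red :: [] := by
    have := congrArg List.tail he
    simpa [hmap] using this
  exact (decomp_unique (d₁ := SkewStep.red) (d₂ := SkewStep.red) hQ₁ hQ₂ rfl rfl ht).1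

lemma gg_ne_hh {Q₁ R₁ Q₂ : List SkewStep} (hQ₁ : IsSkewPath Q₁ 0) (hQ₂ : IsSkewPath Q₂ 0)
    (he : gmap (Q₁, R₁) = hmap Q₂) : False := by
  have ht : Q₁ ++ down :: R₁ = Q₂ ++ red :: [] := by
    have := congrArg List.tail he
    simpa [gmap, hmap] using this
  obtain ⟨-, h, -⟩ := decomp_unique (d₁ := SkewStep.down) (d₂ := SkewStep.red)
    hQ₁ hQ₂ rfl rfl ht
  exact absurd h (by simp)

lemma FS_succ_zero (n : ℕ) :
    FS (n+1) 0 = (Finset.range (n+1)).biUnion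
      (fun i => ((FS i 0) ×ˢ (FS (n-i) 0)).image gmap) := by
  ext l
  simp only [Finset.mem_biUnion, Finset.mem_range, Finset.mem_image, Finset.mem_product, mem_FS]
  constructor
  · rintro ⟨hlen, hpath, hcount⟩
    have hne : l ≠ [] := by intro h0; rw [h0] at hlen; simp at hlen
    rcases decomp hpath hne with ⟨Q, R, hQ, hR, rfl⟩ | ⟨Q, hQ, hQne, rfl⟩
    · rw [count_gg] at hcount
      rw [len_gg] at hlen
      obtain ⟨a, ha⟩ := even_length hQ
      obtain ⟨b, hb⟩ := even_length hR
      exact ⟨a, by omega, (Q, R),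
        ⟨⟨show Q.length = 2*a by omega, hQ, show Q.count red = 0 by omega⟩,
          ⟨show R.length = 2*(n-a) by omega, hR, show R.count red = 0 by omega⟩⟩, rfl⟩
    · rw [count_hh] at hcount
      omega
  · rintro ⟨i, hi, ⟨Q, R⟩, ⟨⟨hQl, hQp, hQc⟩, ⟨hRl, hRp, hRc⟩⟩, rfl⟩
    dsimp only at hQl hQc hRl hRc
    refine ⟨?_, skew_gg hQp hRp, ?_⟩
    · rw [gmap_eq, len_gg]; omega
    · rw [gmap_eq, count_gg]; omega

lemma card_FS_succ_zero (n : ℕ) :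
    (FS (n+1) 0).card = ∑ i ∈ Finset.range (n+1), (FS i 0).card * (FS (n-i) 0).card := by
  rw [FS_succ_zero, Finset.card_biUnion]
  · refine Finset.sum_congr rfl (fun i _ => ?_)
    rw [Finset.card_image_of_injOn, Finset.card_product]
    rintro ⟨Q₁, R₁⟩ h₁ ⟨Q₂, R₂⟩ h₂ he
    simp only [Finset.coe_product, Set.mem_prod, Finset.mem_coe, mem_FS] at h₁ h₂
    obtain ⟨hq, hr⟩ := gg_inj h₁.1.2.1 h₂.1.2.1 he
    simp [hq, hr]
  · intro i _ j _ hij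
    rw [Function.onFun, Finset.disjoint_left]
    rintro l hl₁ hl₂
    simp only [Finset.mem_image, Finset.mem_product] at hl₁ hl₂
    obtain ⟨⟨Q₁, R₁⟩, ⟨h₁, -⟩, rfl⟩ := hl₁
    obtain ⟨⟨Q₂, R₂⟩, ⟨h₂, -⟩, he⟩ := hl₂
    rw [mem_FS] at h₁ h₂
    obtain ⟨hq, -⟩ := gg_inj h₂.2.1 h₁.2.1 he
    apply hij
    have := congrArg List.length hq
    omega

lemma FS_succ_one (n : ℕ) :
    FS (n+1) 1 = ((Finset.range (n+1)).biUnion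
      (fun i => ((FS i 0) ×ˢ (FS (n-i) 1)).image gmap ∪ ((FS i 1) ×ˢ (FS (n-i) 0)).image gmap))
      ∪ ((FS n 0).erase []).image hmap := by
  ext l
  simp only [Finset.mem_union, Finset.mem_biUnion, Finset.mem_range, Finset.mem_image,
    Finset.mem_product, Finset.mem_erase, mem_FS]
  constructor
  · rintro ⟨hlen, hpath, hcount⟩
    have hne : l ≠ [] := by intro h0; rw [h0] at hlen; simp at hlen
    rcases decomp hpath hne with ⟨Q, R, hQ, hR, rfl⟩ | ⟨Q, hQ, hQne, rfl⟩
    · rw [count_gg] at hcount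
      rw [len_gg] at hlen
      obtain ⟨a, ha⟩ := even_length hQ
      obtain ⟨b, hb⟩ := even_length hR
      left
      rcases Nat.eq_zero_or_pos (Q.count red) with hc | hc
      · exact ⟨a, by omega, Or.inl ⟨(Q, R),
          ⟨⟨show Q.length = 2*a by omega, hQ, show Q.count red = 0 by omega⟩,
            ⟨show R.length = 2*(n-a) by omega, hR, show R.count red = 1 by omega⟩⟩, rfl⟩⟩
      · exact ⟨a, by omega, Or.inr ⟨(Q, R),
          ⟨⟨show Q.length = 2*a by omega, hQ, show Q.count red = 1 by omega⟩,
            ⟨show R.length = 2*(n-a) by omega, hR, show R.count red = 0 by omega⟩⟩, rfl⟩⟩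
    · rw [count_hh] at hcount
      rw [len_hh] at hlen
      right
      exact ⟨Q, ⟨hQne, by omega, hQ, by omega⟩, rfl⟩
  · rintro (⟨i, hi, (⟨⟨Q, R⟩, ⟨⟨hQl, hQp, hQc⟩, ⟨hRl, hRp, hRc⟩⟩, rfl⟩ |
        ⟨⟨Q, R⟩, ⟨⟨hQl, hQp, hQc⟩, ⟨hRl, hRp, hRc⟩⟩, rfl⟩)⟩ |
        ⟨Q, ⟨hQne, hQl, hQp, hQc⟩, rfl⟩)
    · dsimp only at hQl hQc hRl hRc
      exact ⟨by rw [gmap_eq, len_gg]; omega, skew_gg hQp hRp, by rw [gmap_eq, count_gg]; omega⟩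
    · dsimp only at hQl hQc hRl hRc
      exact ⟨by rw [gmap_eq, len_gg]; omega, skew_gg hQp hRp, by rw [gmap_eq, count_gg]; omega⟩
    · exact ⟨by rw [hmap_eq, len_hh]; omega, skew_hh hQp hQne, by rw [hmap_eq, count_hh]; omega⟩

lemma card_gg_image (i s j t : ℕ) :
    (((FS i s) ×ˢ (FS j t)).image gmap).card = (FS i s).card * (FS j t).card := by
  rw [Finset.card_image_of_injOn, Finset.card_product]
  rintro ⟨Q₁, R₁⟩ h₁ ⟨Q₂, R₂⟩ h₂ he
  simp only [Finset.coe_product, Set.mem_prod, Finset.mem_coe, mem_FS] at h₁ h₂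
  obtain ⟨hq, hr⟩ := gg_inj h₁.1.2.1 h₂.1.2.1 he
  simp [hq, hr]

lemma exists_of_mem_gg_image {i s j t : ℕ} {l : List SkewStep}
    (h : l ∈ ((FS i s) ×ˢ (FS j t)).image gmap) :
    ∃ Q R, Q.length = 2*i ∧ Q.count red = s ∧ IsSkewPath Q 0 ∧ IsSkewPath R 0
      ∧ l = gmap (Q, R) := by
  simp only [Finset.mem_image, Finset.mem_product, mem_FS] at h
  obtain ⟨⟨Q, R⟩, ⟨h₁, h₂⟩, rfl⟩ := h
  exact ⟨Q, R, h₁.1, h₁.2.2, h₁.2.1, h₂.2.1, rfl⟩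

lemma mem_U {n i : ℕ} {l : List SkewStep}
    (h : l ∈ ((FS i 0) ×ˢ (FS (n-i) 1)).image gmap ∪ ((FS i 1) ×ˢ (FS (n-i) 0)).image gmap) :
    ∃ Q R, Q.length = 2*i ∧ IsSkewPath Q 0 ∧ l = gmap (Q, R) := by
  rw [Finset.mem_union] at h
  rcases h with h | h <;>
  · obtain ⟨Q, R, h1, -, h3, -, rfl⟩ := exists_of_mem_gg_image h
    exact ⟨Q, R, h1, h3, rfl⟩

lemma card_FS_succ_one (n : ℕ) :
    (FS (n+1) 1).card + (if n = 0 then 1 else 0) =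
      (∑ i ∈ Finset.range (n+1),
        ((FS i 0).card * (FS (n-i) 1).card + (FS i 1).card * (FS (n-i) 0).card))
      + (FS n 0).card := by
  have herase : ((FS n 0).erase []).card + (if n = 0 then 1 else 0) = (FS n 0).card := by
    by_cases hn : n = 0
    · subst hn
      rw [FS_zero_zero]
      simp
    · rw [Finset.erase_eq_of_notMem, if_neg hn, add_zero]
      intro hmem
      rw [mem_FS] at hmem
      have h1 := hmem.1
      simp at h1
      omega
  have hU : ∀ i ∈ Finset.range (n+1),
      (((FS i 0) ×ˢ (FS (n-i) 1)).image gmap ∪ ((FS i 1) ×ˢ (FS (n-i) 0)).image gmap).card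
        = (FS i 0).card * (FS (n-i) 1).card + (FS i 1).card * (FS (n-i) 0).card := by
    intro i _
    rw [Finset.card_union_of_disjoint, card_gg_image, card_gg_image]
    rw [Finset.disjoint_left]
    intro l h1 h2
    obtain ⟨Q₁, R₁, hl₁, hc₁, hp₁, -, rfl⟩ := exists_of_mem_gg_image h1
    obtain ⟨Q₂, R₂, hl₂, hc₂, hp₂, -, he⟩ := exists_of_mem_gg_image h2
    obtain ⟨hq, -⟩ := gg_inj hp₁ hp₂ he
    rw [← hq] at hc₂
    omega
  have hpair : ∀ i ∈ Finset.range (n+1), ∀ j ∈ Finset.range (n+1), i ≠ j →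
      Disjoint (((FS i 0) ×ˢ (FS (n-i) 1)).image gmap ∪ ((FS i 1) ×ˢ (FS (n-i) 0)).image gmap)
        (((FS j 0) ×ˢ (FS (n-j) 1)).image gmap ∪ ((FS j 1) ×ˢ (FS (n-j) 0)).image gmap) := by
    intro i _ j _ hij
    rw [Finset.disjoint_left]
    intro l h1 h2
    obtain ⟨Q₁, R₁, hl₁, hp₁, rfl⟩ := mem_U h1
    obtain ⟨Q₂, R₂, hl₂, hp₂, he⟩ := mem_U h2
    obtain ⟨hq, -⟩ := gg_inj hp₁ hp₂ he
    rw [← hq] at hl₂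
    omega
  have h1 : ((Finset.range (n+1)).biUnion
      (fun i => ((FS i 0) ×ˢ (FS (n-i) 1)).image gmap ∪ ((FS i 1) ×ˢ (FS (n-i) 0)).image gmap)).card
      = ∑ i ∈ Finset.range (n+1),
        ((FS i 0).card * (FS (n-i) 1).card + (FS i 1).card * (FS (n-i) 0).card) := by
    rw [Finset.card_biUnion hpair]
    exact Finset.sum_congr rfl hU
  have h2 : (((FS n 0).erase []).image hmap).card = ((FS n 0).erase []).card := by
    apply Finset.card_image_of_injOn
    intro Q₁ h₁ Q₂ h₂ he
    simp only [Finset.coe_erase, Set.mem_diff, Finset.mem_coe, mem_FS] at h₁ h₂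
    exact hh_inj h₁.1.2.1 h₂.1.2.1 he
  have h3 : Disjoint ((Finset.range (n+1)).biUnion
      (fun i => ((FS i 0) ×ˢ (FS (n-i) 1)).image gmap ∪ ((FS i 1) ×ˢ (FS (n-i) 0)).image gmap))
      (((FS n 0).erase []).image hmap) := by
    rw [Finset.disjoint_left]
    intro l h1 h2
    rw [Finset.mem_biUnion] at h1
    obtain ⟨i, -, h1⟩ := h1
    obtain ⟨Q₁, R₁, -, hp₁, rfl⟩ := mem_U h1
    rw [Finset.mem_image] at h2
    obtain ⟨Q₂, hm₂, he⟩ := h2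
    rw [Finset.mem_erase, mem_FS] at hm₂
    exact gg_ne_hh hp₁ hm₂.2.2.1 he.symm
  rw [FS_succ_one, Finset.card_union_of_disjoint h3, h1, h2]
  omega

/-! ### power series: evaluation at w=0 and coefficient of w -/

noncomputable def Ew : PowerSeries (Polynomial ℚ) →+* PowerSeries ℚ :=
  PowerSeries.map (Polynomial.evalRingHom 0)

lemma coeff_Ew (n : ℕ) (f : PowerSeries (Polynomial ℚ)) :
    PowerSeries.coeff n (Ew f) = (PowerSeries.coeff n f).coeff 0 := by
  rw [Ew, PowerSeries.coeff_map, Polynomial.coeff_zero_eq_eval_zero]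
  rfl

noncomputable def Dw (f : PowerSeries (Polynomial ℚ)) : PowerSeries ℚ :=
  PowerSeries.mk (fun n => (PowerSeries.coeff n f).coeff 1)

lemma coeff_Dw (n : ℕ) (f : PowerSeries (Polynomial ℚ)) :
    PowerSeries.coeff n (Dw f) = (PowerSeries.coeff n f).coeff 1 :=
  PowerSeries.coeff_mk _ _

lemma Dw_add (f g : PowerSeries (Polynomial ℚ)) : Dw (f + g) = Dw f + Dw g := by
  ext n
  simp [coeff_Dw]

lemma Dw_one : Dw 1 = 0 := by
  ext n
  simp only [coeff_Dw, PowerSeries.coeff_one, map_zero]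
  split <;> simp [Polynomial.coeff_one]

lemma Dw_X : Dw PowerSeries.X = 0 := by
  ext n
  simp only [coeff_Dw, PowerSeries.coeff_X, map_zero]
  split <;> simp [Polynomial.coeff_one]

lemma Ew_X : Ew PowerSeries.X = PowerSeries.X := PowerSeries.map_X _

lemma Ew_w : Ew (PowerSeries.C Polynomial.X) = 0 := by
  ext n
  simp only [coeff_Ew, PowerSeries.coeff_C, map_zero]
  split <;> simp

lemma Dw_w : Dw (PowerSeries.C Polynomial.X) = 1 := by
  ext n
  simp only [coeff_Dw, PowerSeries.coeff_C, PowerSeries.coeff_one]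
  split <;> simp

lemma Dw_mul (f g : PowerSeries (Polynomial ℚ)) :
    Dw (f * g) = Ew f * Dw g + Dw f * Ew g := by
  ext n
  simp only [coeff_Dw, map_add, PowerSeries.coeff_mul, coeff_Ew]
  rw [Polynomial.finset_sum_coeff, ← Finset.sum_add_distrib]
  refine Finset.sum_congr rfl (fun p _ => ?_)
  rw [Polynomial.coeff_mul]
  rw [show (Finset.HasAntidiagonal.antidiagonal 1 : Finset (ℕ × ℕ)) = {(0,1),(1,0)} from rfl]
  rw [Finset.sum_insert (by decide), Finset.sum_singleton]

lemma natCard_eq (n r : ℕ) :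
    Nat.card {l : List SkewStep //
        l.length = 2 * n ∧ IsSkewPath l 0 ∧ l.count SkewStep.red = r} = (FS n r).card := by
  rw [← Nat.card_eq_finsetCard (FS n r)]
  exact Nat.card_congr (Equiv.subtypeEquivRight (fun l => mem_FS.symm))

end SkewAux


open SkewAux in
/-- The coefficient of `w¹` in `S(0) = (1 - wx - √(1-(4+2w)x+(4w+w²)x²))/(2x)`
equals `(1-2x-√(1-4x))/(2√(1-4x))`; it is the generating function of skew Dyck
paths with exactly one south-west (red) step. -/
theorem redEdge_w1
    (W S : PowerSeries (Polynomial ℚ))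
    (w : PowerSeries (Polynomial ℚ))
    (hw : w = PowerSeries.C Polynomial.X)
    (hW : W ^ 2 = 1 - (4 + 2 * w) * PowerSeries.X
        + (4 * w + w ^ 2) * PowerSeries.X ^ 2)
    (hW0 : PowerSeries.coeff 0 W = 1)
    (hS : 2 * PowerSeries.X * S = 1 - w * PowerSeries.X - W)
    (T : PowerSeries ℚ)
    (hT : ∀ n : ℕ, (PowerSeries.coeff n S).coeff 1
        = PowerSeries.coeff n T)
    (V : PowerSeries ℚ)
    (hV : V ^ 2 = 1 - 4 * PowerSeries.X)
    (hV0 : PowerSeries.coeff 0 V = 1) :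
    2 * V * T = 1 - 2 * PowerSeries.X - V ∧
    ∀ n : ℕ, PowerSeries.coeff n T
      = Nat.card {l : List SkewStep //
          l.length = 2 * n ∧ IsSkewPath l 0 ∧ l.count SkewStep.red = 1} := by
  classical
  -- rewrite W via hS
  have hWeq : W = 1 - w * PowerSeries.X - 2 * PowerSeries.X * S := by
    linear_combination hS
  rw [hWeq] at hW
  -- the quadratic functional equation for S
  have hX0 : (PowerSeries.X : PowerSeries (Polynomial ℚ)) ≠ 0 := by
    intro h0
    have := congrArg (PowerSeries.coeff 1) h0
    simp at this
  have h40 : (4 : PowerSeries (Polynomial ℚ)) ≠ 0 := by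
    intro h0
    have h1 : (PowerSeries.constantCoeff (R := Polynomial ℚ)) 4 = 4 := map_ofNat _ 4
    rw [h0, map_zero] at h1
    exact absurd h1.symm (by norm_num)
  have key : (4 : PowerSeries (Polynomial ℚ)) *
      (PowerSeries.X * (S - (1 + PowerSeries.X * S^2 + w * PowerSeries.X * (S-1)))) = 0 := by
    linear_combination -hW
  have heqI : S = 1 + PowerSeries.X * S^2 + w * PowerSeries.X * (S - 1) := by
    rcases mul_eq_zero.mp key with h0 | h0
    · exact absurd h0 h40
    rcases mul_eq_zero.mp h0 with h0 | h0
    · exact absurd h0 hX0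
    · exact sub_eq_zero.mp h0
  set Cs : PowerSeries ℚ := Ew S with hCsdef
  -- functional equation for Cs
  have hCs : Cs = 1 + PowerSeries.X * Cs^2 := by
    have h := congrArg Ew heqI
    rw [hw] at h
    simp only [map_add, map_mul, map_one, map_pow, map_sub, Ew_X, Ew_w, hCsdef] at h
    linear_combination h
  -- Dw S = T
  have hTS : Dw S = T := PowerSeries.ext fun n => by rw [coeff_Dw]; exact hT n
  -- functional equation for T
  have hTeq : T = PowerSeries.X * (Cs * T + T * Cs) + PowerSeries.X * (Cs - 1) := by
    have h := congrArg Dw heqI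
    rw [show w * PowerSeries.X * (S - 1) = w * (PowerSeries.X * (S - 1)) by ring] at h
    rw [Dw_add, Dw_add, Dw_one, hTS] at h
    have e1 : Dw (PowerSeries.X * S^2) = PowerSeries.X * (Cs * T + T * Cs) := by
      rw [pow_two, Dw_mul, Dw_mul, Dw_X, Ew_X, hTS, zero_mul, add_zero, hCsdef]
    have e2 : Dw (w * (PowerSeries.X * (S - 1))) = PowerSeries.X * (Cs - 1) := by
      rw [hw, Dw_mul, Ew_w, Dw_w, zero_mul, one_mul, zero_add, map_mul, map_sub, map_one, Ew_X,
        hCsdef]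
    rw [e1, e2, zero_add] at h
    exact h
  -- Ew W = V
  have hEW : (Ew W)^2 = 1 - 4 * PowerSeries.X := by
    have h := congrArg Ew (hWeq ▸ hW : W^2 = _)
    rw [hw] at h
    simp only [map_add, map_mul, map_one, map_pow, map_sub, map_ofNat, Ew_X, Ew_w] at h
    linear_combination h
  have hEW0 : PowerSeries.coeff 0 (Ew W) = 1 := by
    rw [coeff_Ew, hW0]
    simp
  have hVW : Ew W = V := by
    have hsq : (Ew W - V) * (Ew W + V) = 0 := by linear_combination hEW - hV
    rcases mul_eq_zero.mp hsq with h0 | h0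
    · exact sub_eq_zero.mp h0
    · exfalso
      have := congrArg (PowerSeries.coeff 0) h0
      rw [map_add, hEW0, hV0] at this
      simp at this
  have hCV : 2 * PowerSeries.X * Cs = 1 - V := by
    have h := congrArg Ew hS
    rw [hw] at h
    simp only [map_add, map_mul, map_one, map_sub, map_ofNat, Ew_X, Ew_w, hVW, hCsdef] at h
    linear_combination h
  constructor
  · -- the algebraic identity
    linear_combination 2 * hTeq + (2 * T + 1) * hCV
  · -- the counting identity
    have hCs0 : PowerSeries.coeff 0 Cs = 1 := by
      conv_lhs => rw [hCs]
      rw [map_add]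
      simp
    have hT0 : PowerSeries.coeff 0 T = 0 := by
      conv_lhs => rw [hTeq]
      rw [map_add]
      simp
    have hCsrec : ∀ m : ℕ, PowerSeries.coeff (m+1) Cs
        = ∑ k ∈ Finset.range (m+1), PowerSeries.coeff k Cs * PowerSeries.coeff (m-k) Cs := by
      intro m
      conv_lhs => rw [hCs]
      rw [map_add, PowerSeries.coeff_succ_X_mul, pow_two, PowerSeries.coeff_mul,
        Finset.Nat.sum_antidiagonal_eq_sum_range_succ_mk]
      simp [PowerSeries.coeff_one]
    have hTrec : ∀ m : ℕ, PowerSeries.coeff (m+1) T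
        = (∑ k ∈ Finset.range (m+1),
            (PowerSeries.coeff k Cs * PowerSeries.coeff (m-k) T
              + PowerSeries.coeff k T * PowerSeries.coeff (m-k) Cs))
          + PowerSeries.coeff m Cs - (if m = 0 then 1 else 0) := by
      intro m
      conv_lhs => rw [hTeq]
      rw [map_add, PowerSeries.coeff_succ_X_mul, PowerSeries.coeff_succ_X_mul, map_add,
        PowerSeries.coeff_mul, PowerSeries.coeff_mul,
        Finset.Nat.sum_antidiagonal_eq_sum_range_succ_mk,
        Finset.Nat.sum_antidiagonal_eq_sum_range_succ_mk,
        ← Finset.sum_add_distrib, map_sub, PowerSeries.coeff_one]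
      ring
    have main : ∀ n : ℕ, PowerSeries.coeff n Cs = ((FS n 0).card : ℚ)
        ∧ PowerSeries.coeff n T = ((FS n 1).card : ℚ) := by
      intro n
      induction n using Nat.strong_induction_on with
      | _ n ih =>
        match n with
        | 0 =>
          constructor
          · rw [hCs0, card_FS_zero_zero]; norm_num
          · rw [hT0, card_FS_zero_one]; norm_num
        | (m+1) =>
          constructor
          · rw [hCsrec m, card_FS_succ_zero m]
            push_cast
            refine Finset.sum_congr rfl (fun k hk => ?_)
            rw [Finset.mem_range] at hk
            rw [(ih k (by omega)).1, (ih (m-k) (by omega)).1]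
          · rw [hTrec m]
            have hc := card_FS_succ_one m
            have hcq : ((FS (m+1) 1).card : ℚ)
                = (∑ i ∈ Finset.range (m+1),
                    (((FS i 0).card : ℚ) * ((FS (m-i) 1).card : ℚ)
                      + ((FS i 1).card : ℚ) * ((FS (m-i) 0).card : ℚ)))
                  + ((FS m 0).card : ℚ) - (if m = 0 then 1 else 0) := by
              have h := congrArg (Nat.cast : ℕ → ℚ) hc
              push_cast at h
              linarith
            rw [hcq, (ih m (by omega)).1]
            have hsum : ∑ k ∈ Finset.range (m+1),
                (PowerSeries.coeff k Cs * PowerSeries.coeff (m-k) T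
                  + PowerSeries.coeff k T * PowerSeries.coeff (m-k) Cs)
                = ∑ i ∈ Finset.range (m+1),
                    (((FS i 0).card : ℚ) * ((FS (m-i) 1).card : ℚ)
                      + ((FS i 1).card : ℚ) * ((FS (m-i) 0).card : ℚ)) := by
              refine Finset.sum_congr rfl (fun k hk => ?_)
              rw [Finset.mem_range] at hk
              rw [(ih k (by omega)).1, (ih (m-k) (by omega)).1,
                (ih k (by omega)).2, (ih (m-k) (by omega)).2]
            rw [hsum]
    intro n
    rw [natCard_eq n 1]
    exact (main n).2
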